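/- Consider the EM setting for IPHs with absorption times τ⁽ⁿ⁾. The conditional expected number of absorptions from state i during (s_{k-1},s_k] equals Ō_{i,p+1}(k) = ∑ₙ 1{τ⁽ⁿ⁾ ∈ (s_{k-1},s_k]} · π P̄(0,τ⁽ⁿ⁾) eᵢ tᵢ(τ⁽ⁿ⁾) / (π P̄(0,τ⁽ⁿ⁾) t(τ⁽ⁿ⁾)), i.e., P(X⁽ⁿ⁾(τ⁽ⁿ⁾-) = i | τ⁽ⁿ⁾) = π P̄(0,τ⁽ⁿ⁾) eᵢ tᵢ(τ⁽ⁿ⁾) / f(τ⁽ⁿ⁾). -/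

import Mathlib

open Matrix

attribute [local instance] Matrix.linftyOpNormedRing Matrix.linftyOpNormedAlgebra

/-- In the EM setting for IPHs with absorption times `τ⁽ⁿ⁾`, the
conditional probability of being absorbed from state `i`, given the absorption time,
is `P(X(τ-) = i | τ = x) = π P̄(0,x) eᵢ tᵢ(x) / f(x)` with `f(x) = π P̄(0,x) t(x)`:
in density form it is the limit as `h ↓ 0` of
`P(X(x)=i, x < τ ≤ x+h) / P(x < τ ≤ x+h)`, where
`P(X(x)=i, τ>y) = (π P̄(0,x))ᵢ (eᵢ' P̄(x,y) e)` and `P(τ>y) = π P̄(0,y) e`.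
Consequently, if `c(x)` denotes this conditional probability, the conditional expected
number of absorptions from `i` during `(s_{k-1}, s_k]` equals
`Ō_{i,p+1}(k) = ∑ₙ 1{τ⁽ⁿ⁾ ∈ (s_{k-1},s_k]} π P̄(0,τ⁽ⁿ⁾) eᵢ tᵢ(τ⁽ⁿ⁾) / f(τ⁽ⁿ⁾)`. -/
theorem conditional_expected_absorptions
    {p : ℕ} (P : ℝ → ℝ → Matrix (Fin p) (Fin p) ℝ)
    (T : ℝ → Matrix (Fin p) (Fin p) ℝ)
    (tv : ℝ → Fin p → ℝ) (htv : ∀ x, tv x = -(T x *ᵥ (1 : Fin p → ℝ)))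
    (π : Fin p → ℝ) (hπ0 : ∀ i, 0 ≤ π i) (hπ1 : ∑ i, π i = 1)
    -- Kolmogorov forward equation and initial condition for the product integral:
    (hode : ∀ a u : ℝ, HasDerivAt (fun y => P a y) (P a u * T u) u)
    (hid : ∀ a : ℝ, P a a = 1)
    (i : Fin p)
    -- `c x` is the conditional probability `P(X(τ-) = i | τ = x)` (density limit):
    (c : ℝ → ℝ)
    (hc : ∀ x : ℝ, 0 < x → π ᵥ* P 0 x ⬝ᵥ tv x ≠ 0 →
      Filter.Tendsto
        (fun h : ℝ =>
          ((π ᵥ* P 0 x) i * (1 - (P x (x + h) *ᵥ (1 : Fin p → ℝ)) i))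
            / ((π ᵥ* P 0 x ⬝ᵥ (1 : Fin p → ℝ)) - (π ᵥ* P 0 (x + h) ⬝ᵥ (1 : Fin p → ℝ))))
        (nhdsWithin 0 (Set.Ioi 0)) (nhds (c x))) :
    -- then `c` has the asserted form, and the conditional expected occurrences of
    -- absorption in a grid interval `(a, b]` are given by the stated sum:
    (∀ x : ℝ, 0 < x → π ᵥ* P 0 x ⬝ᵥ tv x ≠ 0 →
        c x = (π ᵥ* P 0 x) i * tv x i / (π ᵥ* P 0 x ⬝ᵥ tv x)) ∧
    (∀ (N : ℕ) (τ : ℕ → ℝ) (a b : ℝ),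
        (∀ n, 0 < τ n) → (∀ n, π ᵥ* P 0 (τ n) ⬝ᵥ tv (τ n) ≠ 0) →
        ∑ n ∈ Finset.range N, (if τ n ∈ Set.Ioc a b then c (τ n) else 0)
          = ∑ n ∈ Finset.range N,
              (if τ n ∈ Set.Ioc a b then
                (π ᵥ* P 0 (τ n)) i * tv (τ n) i / (π ᵥ* P 0 (τ n) ⬝ᵥ tv (τ n))
              else 0)) := by
  classical
  have key : ∀ x : ℝ, 0 < x → π ᵥ* P 0 x ⬝ᵥ tv x ≠ 0 →
      c x = (π ᵥ* P 0 x) i * tv x i / (π ᵥ* P 0 x ⬝ᵥ tv x) := by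
    intro x hx hne
    -- linear functionals
    set L1 : Matrix (Fin p) (Fin p) ℝ →ₗ[ℝ] ℝ :=
      { toFun := fun M => π ᵥ* M ⬝ᵥ (1 : Fin p → ℝ)
        map_add' := by intro M N; simp [Matrix.vecMul_add, add_dotProduct]
        map_smul' := by
          intro r M
          simp [Matrix.vecMul, dotProduct, Finset.mul_sum, Finset.sum_mul,
            mul_comm, mul_left_comm, mul_assoc] } with hL1
    set L2 : Matrix (Fin p) (Fin p) ℝ →ₗ[ℝ] ℝ :=
      { toFun := fun M => (M *ᵥ (1 : Fin p → ℝ)) i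
        map_add' := by intro M N; simp [Matrix.add_mulVec]
        map_smul' := by intro r M; simp [Matrix.smul_mulVec] } with hL2
    -- derivative of h ↦ P a (x + h) at 0
    have hMx : HasDerivAt (fun h : ℝ => P x (x + h)) (T x) 0 := by
      have h1 : HasDerivAt (fun h : ℝ => x + h) 1 0 := by
        simpa using (hasDerivAt_id (0:ℝ)).const_add x
      have hg : HasDerivAt (fun y => P x y) (P x x * T x) (x + 0) := by
        simpa using hode x x
      have := hg.scomp 0 h1
      simp only [hid x, Function.comp_def, one_mul, one_smul] at this
      exact this
    have hM0 : HasDerivAt (fun h : ℝ => P 0 (x + h)) (P 0 x * T x) 0 := by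
      have h1 : HasDerivAt (fun h : ℝ => x + h) 1 0 := by
        simpa using (hasDerivAt_id (0:ℝ)).const_add x
      have hg : HasDerivAt (fun y => P 0 y) (P 0 x * T x) (x + 0) := by
        simpa using hode 0 x
      have := hg.scomp 0 h1
      simp only [Function.comp_def, one_smul] at this
      exact this
    have hL2d : HasDerivAt (fun h : ℝ => (P x (x + h) *ᵥ (1 : Fin p → ℝ)) i)
        ((T x *ᵥ (1 : Fin p → ℝ)) i) 0 :=
      (L2.toContinuousLinearMap.hasFDerivAt.comp_hasDerivAt 0 hMx :)
    have hL1d : HasDerivAt (fun h : ℝ => π ᵥ* P 0 (x + h) ⬝ᵥ (1 : Fin p → ℝ))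
        (π ᵥ* (P 0 x * T x) ⬝ᵥ (1 : Fin p → ℝ)) 0 :=
      (L1.toContinuousLinearMap.hasFDerivAt.comp_hasDerivAt 0 hM0 :)
    -- numerator and denominator
    set Nf : ℝ → ℝ := fun h =>
      (π ᵥ* P 0 x) i * (1 - (P x (x + h) *ᵥ (1 : Fin p → ℝ)) i) with hNf
    set Df : ℝ → ℝ := fun h =>
      (π ᵥ* P 0 x ⬝ᵥ (1 : Fin p → ℝ)) - (π ᵥ* P 0 (x + h) ⬝ᵥ (1 : Fin p → ℝ)) with hDf
    have hN0 : Nf 0 = 0 := by simp [hNf, hid x, Matrix.one_mulVec]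
    have hD0 : Df 0 = 0 := by simp [hDf]
    have hNd : HasDerivAt Nf ((π ᵥ* P 0 x) i * tv x i) 0 := by
      have := (hL2d.const_sub 1).const_mul ((π ᵥ* P 0 x) i)
      simpa [hNf, htv x] using this
    have hDd : HasDerivAt Df (π ᵥ* P 0 x ⬝ᵥ tv x) 0 := by
      have := hL1d.const_sub (π ᵥ* P 0 x ⬝ᵥ (1 : Fin p → ℝ))
      have h2 : π ᵥ* (P 0 x * T x) ⬝ᵥ (1 : Fin p → ℝ) = -(π ᵥ* P 0 x ⬝ᵥ tv x) := by
        rw [htv x, ← Matrix.vecMul_vecMul]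
        simp [dotProduct_neg, Matrix.dotProduct_mulVec]
      simpa [hDf, h2] using this
    -- slope limits
    have hNs : Filter.Tendsto (fun h : ℝ => Nf h / h) (nhdsWithin 0 (Set.Ioi 0))
        (nhds ((π ᵥ* P 0 x) i * tv x i)) := by
      have := (hasDerivAt_iff_tendsto_slope.1 hNd).mono_left
        (nhdsWithin_mono 0 (by intro y hy; exact ne_of_gt hy))
      refine this.congr fun h => ?_
      simp [slope, hN0, div_eq_inv_mul]
    have hDs : Filter.Tendsto (fun h : ℝ => Df h / h) (nhdsWithin 0 (Set.Ioi 0))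
        (nhds (π ᵥ* P 0 x ⬝ᵥ tv x)) := by
      have := (hasDerivAt_iff_tendsto_slope.1 hDd).mono_left
        (nhdsWithin_mono 0 (by intro y hy; exact ne_of_gt hy))
      refine this.congr fun h => ?_
      simp [slope, hD0, div_eq_inv_mul]
    have hlim : Filter.Tendsto (fun h : ℝ => Nf h / Df h) (nhdsWithin 0 (Set.Ioi 0))
        (nhds ((π ᵥ* P 0 x) i * tv x i / (π ᵥ* P 0 x ⬝ᵥ tv x))) := by
      have := hNs.div hDs hne
      refine this.congr' ?_
      filter_upwards [self_mem_nhdsWithin] with h hh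
      have hh0 : (h : ℝ) ≠ 0 := ne_of_gt hh
      rw [Pi.div_apply, div_div_div_cancel_right₀ hh0]
    exact tendsto_nhds_unique (hc x hx hne) hlim
  refine ⟨key, ?_⟩
  intro N τ a b hτ hne
  refine Finset.sum_congr rfl fun n _ => ?_
  split_ifs with h
  · exact key (τ n) (hτ n) (hne n)
  · rfl
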